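/- Lipschitz continuity of the OTOC on the unitary group: for fixed orthogonal projections P₁, Q₁ on ℂ^D with Tr Q₁ = D_ρ ≥ 1, the function F(U) = (1/D_ρ)·Tr[P₁UQ₁U†P₁UQ₁U†] satisfies |F(U) − F(V)| ≤ (4/√D_ρ)·‖U − V‖_HS for all unitaries U, V. -/

import Mathlib

open Matrix Complex

/-- The Hilbert–Schmidt (Frobenius) norm `‖X‖_HS = √Tr(X†X)`. -/
noncomputable def hsNorm {D : ℕ} (X : Matrix (Fin D) (Fin D) ℂ) : ℝ :=
  Real.sqrt (((Xᴴ * X).trace).re)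

namespace Stmt15Aux

lemma trace_re_eq_sum {D : ℕ} (X : Matrix (Fin D) (Fin D) ℂ) :
    ((Xᴴ * X).trace).re = ∑ j, ∑ i, ‖X i j‖ ^ 2 := by
  simp only [Matrix.trace, Matrix.diag, Matrix.mul_apply, Matrix.conjTranspose_apply,
    Complex.re_sum]
  congr 1; ext j; congr 1; ext i
  rw [Complex.star_def, ← Complex.normSq_eq_conj_mul_self, Complex.ofReal_re,
    Complex.normSq_eq_norm_sq]

lemma trace_re_nonneg {D : ℕ} (X : Matrix (Fin D) (Fin D) ℂ) :
    0 ≤ ((Xᴴ * X).trace).re := by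
  rw [trace_re_eq_sum]
  positivity

lemma hsNorm_nonneg {D : ℕ} (X : Matrix (Fin D) (Fin D) ℂ) : 0 ≤ hsNorm X :=
  Real.sqrt_nonneg _

lemma hs_cs {D : ℕ} (X Y : Matrix (Fin D) (Fin D) ℂ) :
    ‖(X * Y).trace‖ ≤ hsNorm Xᴴ * hsNorm Y := by
  let x : EuclideanSpace ℂ (Fin D × Fin D) :=
    (WithLp.equiv 2 (Fin D × Fin D → ℂ)).symm fun p => Xᴴ p.1 p.2
  let y : EuclideanSpace ℂ (Fin D × Fin D) :=
    (WithLp.equiv 2 (Fin D × Fin D → ℂ)).symm fun p => Y p.1 p.2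
  have hnorm : ∀ Z : Matrix (Fin D) (Fin D) ℂ,
      hsNorm Z = ‖(WithLp.equiv 2 (Fin D × Fin D → ℂ)).symm fun p => Z p.1 p.2‖ := by
    intro Z
    rw [EuclideanSpace.norm_eq, hsNorm, trace_re_eq_sum]
    congr 1
    rw [Fintype.sum_prod_type]
    simp only [WithLp.equiv_symm_apply, PiLp.toLp_apply]
    exact Finset.sum_comm
  have h1 : (X * Y).trace = inner (𝕜 := ℂ) x y := by
    simp only [PiLp.inner_apply, RCLike.inner_apply, x, y, Matrix.trace, Matrix.diag,
      Matrix.mul_apply, Matrix.conjTranspose_apply, Fintype.sum_prod_type,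
      WithLp.equiv_symm_apply, PiLp.toLp_apply]
    rw [Finset.sum_comm]
    congr 1; ext j; congr 1; ext i
    simp [Complex.star_def, mul_comm]
  have h2 : hsNorm Xᴴ = ‖x‖ := hnorm _
  have h3 : hsNorm Y = ‖y‖ := hnorm _
  rw [h1, h2, h3]
  exact norm_inner_le_norm x y

lemma hsNorm_conjTranspose {D : ℕ} (X : Matrix (Fin D) (Fin D) ℂ) :
    hsNorm Xᴴ = hsNorm X := by
  unfold hsNorm
  rw [conjTranspose_conjTranspose, Matrix.trace_mul_comm]

lemma hsNorm_mul_unitary {D : ℕ} (X W : Matrix (Fin D) (Fin D) ℂ)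
    (hW : W ∈ Matrix.unitaryGroup (Fin D) ℂ) : hsNorm (X * W) = hsNorm X := by
  have h1 : W * Wᴴ = 1 := by
    rw [← Matrix.star_eq_conjTranspose]
    exact Matrix.mem_unitaryGroup_iff.mp hW
  unfold hsNorm
  congr 2
  rw [conjTranspose_mul]
  rw [← mul_assoc, Matrix.trace_mul_comm, ← mul_assoc, ← mul_assoc, h1, one_mul]

lemma hsNorm_mul_proj {D : ℕ} (X P : Matrix (Fin D) (Fin D) ℂ)
    (hPh : P.IsHermitian) (hPi : P * P = P) : hsNorm (X * P) ≤ hsNorm X := by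
  have hP : Pᴴ = P := hPh
  have c2 : ((P * Xᴴ) * (X * P)).trace = (Xᴴ * (X * P)).trace := by
    rw [Matrix.trace_mul_comm]
    have : X * P * (P * Xᴴ) = X * P * Xᴴ := by
      rw [mul_assoc, ← mul_assoc P P, hPi, ← mul_assoc]
    rw [this]
    exact Matrix.trace_mul_comm (X * P) Xᴴ
  have key : ((X - X * P)ᴴ * (X - X * P)).trace
      = (Xᴴ * X).trace - ((X * P)ᴴ * (X * P)).trace := by
    simp only [conjTranspose_sub, conjTranspose_mul, hP, sub_mul, mul_sub, Matrix.trace_sub]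
    have c1 : ((P * Xᴴ) * X).trace = (Xᴴ * (X * P)).trace := by
      rw [Matrix.trace_mul_cycle]
      exact Matrix.trace_mul_comm (X * P) Xᴴ
    rw [c1, c2]
    ring
  have h0 : 0 ≤ (((X - X * P)ᴴ * (X - X * P)).trace).re := trace_re_nonneg _
  rw [key, Complex.sub_re] at h0
  exact Real.sqrt_le_sqrt (by linarith)

lemma hsNorm_proj {D Dρ : ℕ} (Q : Matrix (Fin D) (Fin D) ℂ)
    (hQh : Q.IsHermitian) (hQi : Q * Q = Q) (htrQ : Q.trace = (Dρ : ℂ)) :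
    hsNorm Q = Real.sqrt Dρ := by
  have hQ : Qᴴ = Q := hQh
  unfold hsNorm
  rw [hQ, hQi, htrQ]
  norm_num

/-- Peeling bound for words `Q W₁ P W₂ Q W₃ P` with unitary `Wᵢ`. -/
lemma hsNorm_word {D Dρ : ℕ} (P Q W₁ W₂ W₃ : Matrix (Fin D) (Fin D) ℂ)
    (hPh : P.IsHermitian) (hPi : P * P = P)
    (hQh : Q.IsHermitian) (hQi : Q * Q = Q) (htrQ : Q.trace = (Dρ : ℂ))
    (h1 : W₁ ∈ Matrix.unitaryGroup (Fin D) ℂ)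
    (h2 : W₂ ∈ Matrix.unitaryGroup (Fin D) ℂ)
    (h3 : W₃ ∈ Matrix.unitaryGroup (Fin D) ℂ) :
    hsNorm (Q * W₁ * P * W₂ * Q * W₃ * P) ≤ Real.sqrt Dρ := by
  calc hsNorm (Q * W₁ * P * W₂ * Q * W₃ * P)
      ≤ hsNorm (Q * W₁ * P * W₂ * Q * W₃) := hsNorm_mul_proj _ _ hPh hPi
    _ = hsNorm (Q * W₁ * P * W₂ * Q) := hsNorm_mul_unitary _ _ h3
    _ ≤ hsNorm (Q * W₁ * P * W₂) := hsNorm_mul_proj _ _ hQh hQi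
    _ = hsNorm (Q * W₁ * P) := hsNorm_mul_unitary _ _ h2
    _ ≤ hsNorm (Q * W₁) := hsNorm_mul_proj _ _ hPh hPi
    _ = hsNorm Q := hsNorm_mul_unitary _ _ h1
    _ = Real.sqrt Dρ := hsNorm_proj Q hQh hQi htrQ

end Stmt15Aux

set_option maxHeartbeats 1000000 in
open Stmt15Aux in
theorem stmt15 {D Dρ : ℕ} (hDρ : 1 ≤ Dρ)
    (P₁ Q₁ : Matrix (Fin D) (Fin D) ℂ)
    (hPh : P₁.IsHermitian) (hPi : P₁ * P₁ = P₁)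
    (hQh : Q₁.IsHermitian) (hQi : Q₁ * Q₁ = Q₁)
    (htrQ : Q₁.trace = (Dρ : ℂ))
    (U V : Matrix (Fin D) (Fin D) ℂ)
    (hU : U ∈ Matrix.unitaryGroup (Fin D) ℂ)
    (hV : V ∈ Matrix.unitaryGroup (Fin D) ℂ) :
    |((P₁ * U * Q₁ * Uᴴ * P₁ * U * Q₁ * Uᴴ).trace).re / Dρ
        - ((P₁ * V * Q₁ * Vᴴ * P₁ * V * Q₁ * Vᴴ).trace).re / Dρ|
      ≤ (4 / Real.sqrt Dρ) * hsNorm (U - V) := by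
  have hP : P₁ᴴ = P₁ := hPh
  have hQ : Q₁ᴴ = Q₁ := hQh
  have hUc : Uᴴ ∈ Matrix.unitaryGroup (Fin D) ℂ := by
    rw [← Matrix.star_eq_conjTranspose]; exact Unitary.star_mem hU
  have hVc : Vᴴ ∈ Matrix.unitaryGroup (Fin D) ℂ := by
    rw [← Matrix.star_eq_conjTranspose]; exact Unitary.star_mem hV
  set s : ℝ := Real.sqrt Dρ with hs
  set h : ℝ := hsNorm (U - V) with hh
  have hDpos : (0 : ℝ) < (Dρ : ℝ) := by
    have h1 : (1 : ℝ) ≤ (Dρ : ℝ) := by exact_mod_cast hDρ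
    linarith
  have hspos : 0 < s := Real.sqrt_pos.mpr hDpos
  have hh0 : 0 ≤ h := hsNorm_nonneg _
  -- the four telescoping terms
  set T₁ := P₁ * (U - V) * Q₁ * Uᴴ * P₁ * U * Q₁ * Uᴴ with hT1
  set T₂ := P₁ * V * Q₁ * (Uᴴ - Vᴴ) * P₁ * U * Q₁ * Uᴴ with hT2
  set T₃ := P₁ * V * Q₁ * Vᴴ * P₁ * (U - V) * Q₁ * Uᴴ with hT3
  set T₄ := P₁ * V * Q₁ * Vᴴ * P₁ * V * Q₁ * (Uᴴ - Vᴴ) with hT4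
  have tele : P₁ * U * Q₁ * Uᴴ * P₁ * U * Q₁ * Uᴴ - P₁ * V * Q₁ * Vᴴ * P₁ * V * Q₁ * Vᴴ
      = T₁ + T₂ + T₃ + T₄ := by
    rw [hT1, hT2, hT3, hT4]
    simp only [Matrix.sub_mul, Matrix.mul_sub]
    abel
  -- rotated trace forms
  have e1 : T₁.trace = ((U - V) * (Q₁ * Uᴴ * P₁ * U * Q₁ * Uᴴ * P₁)).trace := by
    rw [show T₁ = P₁ * ((U - V) * Q₁ * Uᴴ * P₁ * U * Q₁ * Uᴴ) by
      rw [hT1]; simp only [mul_assoc]]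
    rw [Matrix.trace_mul_comm]
    simp only [mul_assoc]
  have e2 : T₂.trace = ((Uᴴ - Vᴴ) * (P₁ * U * Q₁ * Uᴴ * P₁ * V * Q₁)).trace := by
    rw [show T₂ = (P₁ * V * Q₁) * ((Uᴴ - Vᴴ) * P₁ * U * Q₁ * Uᴴ) by
      rw [hT2]; simp only [mul_assoc]]
    rw [Matrix.trace_mul_comm]
    simp only [mul_assoc]
  have e3 : T₃.trace = ((U - V) * (Q₁ * Uᴴ * P₁ * V * Q₁ * Vᴴ * P₁)).trace := by
    rw [show T₃ = (P₁ * V * Q₁ * Vᴴ * P₁) * ((U - V) * Q₁ * Uᴴ) by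
      rw [hT3]; simp only [mul_assoc]]
    rw [Matrix.trace_mul_comm]
    simp only [mul_assoc]
  have e4 : T₄.trace = ((Uᴴ - Vᴴ) * (P₁ * V * Q₁ * Vᴴ * P₁ * V * Q₁)).trace := by
    rw [hT4, Matrix.trace_mul_comm]
  -- norms of residual words
  have m1 : hsNorm (Q₁ * Uᴴ * P₁ * U * Q₁ * Uᴴ * P₁) ≤ s :=
    hsNorm_word P₁ Q₁ Uᴴ U Uᴴ hPh hPi hQh hQi htrQ hUc hU hUc
  have m3 : hsNorm (Q₁ * Uᴴ * P₁ * V * Q₁ * Vᴴ * P₁) ≤ s :=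
    hsNorm_word P₁ Q₁ Uᴴ V Vᴴ hPh hPi hQh hQi htrQ hUc hV hVc
  have m2 : hsNorm (P₁ * U * Q₁ * Uᴴ * P₁ * V * Q₁) ≤ s := by
    rw [← hsNorm_conjTranspose]
    have : (P₁ * U * Q₁ * Uᴴ * P₁ * V * Q₁)ᴴ = Q₁ * Vᴴ * P₁ * U * Q₁ * Uᴴ * P₁ := by
      simp only [conjTranspose_mul, hP, hQ, conjTranspose_conjTranspose, mul_assoc]
    rw [this]
    exact hsNorm_word P₁ Q₁ Vᴴ U Uᴴ hPh hPi hQh hQi htrQ hVc hU hUc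
  have m4 : hsNorm (P₁ * V * Q₁ * Vᴴ * P₁ * V * Q₁) ≤ s := by
    rw [← hsNorm_conjTranspose]
    have : (P₁ * V * Q₁ * Vᴴ * P₁ * V * Q₁)ᴴ = Q₁ * Vᴴ * P₁ * V * Q₁ * Vᴴ * P₁ := by
      simp only [conjTranspose_mul, hP, hQ, conjTranspose_conjTranspose, mul_assoc]
    rw [this]
    exact hsNorm_word P₁ Q₁ Vᴴ V Vᴴ hPh hPi hQh hQi htrQ hVc hV hVc
  -- bounds on the four traces
  have huvT : (U - V)ᴴ = Uᴴ - Vᴴ := conjTranspose_sub U V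
  have hcT : hsNorm (Uᴴ - Vᴴ) = h := by rw [← huvT, hsNorm_conjTranspose]
  have b1 : ‖T₁.trace‖ ≤ h * s := by
    rw [e1]
    calc ‖_‖ ≤ hsNorm (U - V)ᴴ * hsNorm (Q₁ * Uᴴ * P₁ * U * Q₁ * Uᴴ * P₁) :=
          hs_cs _ _
      _ ≤ h * s := by
          rw [huvT, hcT]
          exact mul_le_mul_of_nonneg_left m1 hh0
  have b3 : ‖T₃.trace‖ ≤ h * s := by
    rw [e3]
    calc ‖_‖ ≤ hsNorm (U - V)ᴴ * hsNorm (Q₁ * Uᴴ * P₁ * V * Q₁ * Vᴴ * P₁) :=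
          hs_cs _ _
      _ ≤ h * s := by
          rw [huvT, hcT]
          exact mul_le_mul_of_nonneg_left m3 hh0
  have hcTT : hsNorm (Uᴴ - Vᴴ)ᴴ = h := by rw [← huvT, conjTranspose_conjTranspose]
  have b2 : ‖T₂.trace‖ ≤ h * s := by
    rw [e2]
    calc ‖_‖ ≤ hsNorm (Uᴴ - Vᴴ)ᴴ * hsNorm (P₁ * U * Q₁ * Uᴴ * P₁ * V * Q₁) :=
          hs_cs _ _
      _ ≤ h * s := by
          rw [hcTT]
          exact mul_le_mul_of_nonneg_left m2 hh0
  have b4 : ‖T₄.trace‖ ≤ h * s := by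
    rw [e4]
    calc ‖_‖ ≤ hsNorm (Uᴴ - Vᴴ)ᴴ * hsNorm (P₁ * V * Q₁ * Vᴴ * P₁ * V * Q₁) :=
          hs_cs _ _
      _ ≤ h * s := by
          rw [hcTT]
          exact mul_le_mul_of_nonneg_left m4 hh0
  -- assemble
  have htr : (P₁ * U * Q₁ * Uᴴ * P₁ * U * Q₁ * Uᴴ).trace
      - (P₁ * V * Q₁ * Vᴴ * P₁ * V * Q₁ * Vᴴ).trace
      = T₁.trace + T₂.trace + T₃.trace + T₄.trace := by
    rw [← Matrix.trace_sub, tele, Matrix.trace_add, Matrix.trace_add, Matrix.trace_add]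
  have habs : |((P₁ * U * Q₁ * Uᴴ * P₁ * U * Q₁ * Uᴴ).trace).re
      - ((P₁ * V * Q₁ * Vᴴ * P₁ * V * Q₁ * Vᴴ).trace).re| ≤ 4 * (h * s) := by
    rw [← Complex.sub_re, htr]
    calc |(T₁.trace + T₂.trace + T₃.trace + T₄.trace).re|
        ≤ ‖T₁.trace + T₂.trace + T₃.trace + T₄.trace‖ :=
          Complex.abs_re_le_norm _
      _ ≤ ‖T₁.trace‖ + ‖T₂.trace‖ + ‖T₃.trace‖
            + ‖T₄.trace‖ := by
          calc ‖T₁.trace + T₂.trace + T₃.trace + T₄.trace‖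
              ≤ ‖T₁.trace + T₂.trace + T₃.trace‖ + ‖T₄.trace‖ :=
                norm_add_le _ _
            _ ≤ (‖T₁.trace + T₂.trace‖ + ‖T₃.trace‖)
                  + ‖T₄.trace‖ := by
                gcongr; exact norm_add_le _ _
            _ ≤ ((‖T₁.trace‖ + ‖T₂.trace‖) + ‖T₃.trace‖)
                  + ‖T₄.trace‖ := by
                gcongr; exact norm_add_le _ _
      _ ≤ 4 * (h * s) := by linarith
  rw [div_sub_div_same, abs_div, abs_of_pos hDpos]
  rw [div_le_iff₀ hDpos]
  have hss : s * s = (Dρ : ℝ) := Real.mul_self_sqrt (le_of_lt hDpos)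
  calc |((P₁ * U * Q₁ * Uᴴ * P₁ * U * Q₁ * Uᴴ).trace).re
      - ((P₁ * V * Q₁ * Vᴴ * P₁ * V * Q₁ * Vᴴ).trace).re| ≤ 4 * (h * s) := habs
    _ = 4 / s * h * (Dρ : ℝ) := by
        rw [← hss]; field_simp
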